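/- For all natural numbers r ≥ 1 and 0 ≤ l < r, one has (l+1) · Σ_{k=l+1}^{r} S(r,k)·C(k,l+1) = Σ_{k=l}^{r} S(r,k)·C(k,l)·(k−l). (This is the dimension count underlying the surjectivity of the map θ in the restriction of cell modules from P_{r+1/2} to P_r.) -/

import Mathlib

/-- The Stirling number of the second kind. -/
noncomputable def stirling (r k : ℕ) : ℕ :=
  Nat.card {P : Finpartition (Finset.univ : Finset (Fin r)) // P.parts.card = k}

/-- For `r ≥ 1` and `0 ≤ l < r`:
`(l+1) · Σ_{k=l+1}^{r} S(r,k)·C(k,l+1) = Σ_{k=l}^{r} S(r,k)·C(k,l)·(k−l)`. -/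
theorem stirling_binomial_surjectivity_identity (r l : ℕ) (hr : 1 ≤ r) (hl : l < r) :
    (l + 1) * ∑ k ∈ Finset.Icc (l + 1) r, stirling r k * Nat.choose k (l + 1) =
      ∑ k ∈ Finset.Icc l r, stirling r k * Nat.choose k l * (k - l) := by
  have hins : Finset.Icc l r = insert l (Finset.Icc (l + 1) r) := by
    rw [← Finset.Ioc_insert_left (le_of_lt hl)]; apply Finset.ext; intro x; simp only [Finset.mem_insert, Finset.mem_Ioc, Finset.mem_Icc]; omega
  rw [hins, Finset.sum_insert (by simp), Nat.sub_self, Nat.mul_zero, Nat.zero_add,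
    Finset.mul_sum]
  refine Finset.sum_congr rfl fun k _ => ?_
  rw [mul_comm (l + 1), mul_assoc, Nat.choose_succ_right_eq, mul_assoc]
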